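/- Let n ≥ 2 and let σ ∈ ℝ, σ ≠ 0. If M is an (n+1)×(n+1) real matrix that commutes with [[0, b], [σ·bᵀ, 0]] for every b ∈ ℝⁿ, then M = λ·I_{n+1} for some λ ∈ ℝ. -/

import Mathlib

open Matrix

noncomputable section

abbrev Idx (n : ℕ) := Fin n ⊕ Unit

theorem stmt11 (n : ℕ) (hn : 2 ≤ n) (σ : ℝ) (hσ : σ ≠ 0)
    (M : Matrix (Idx n) (Idx n) ℝ)
    (hM : ∀ b : Fin n → ℝ,
      M * fromBlocks 0 (replicateCol Unit b) (σ • replicateRow Unit b) 0 =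
        fromBlocks 0 (replicateCol Unit b) (σ • replicateRow Unit b) 0 * M) :
    ∃ l : ℝ, M = l • (1 : Matrix (Idx n) (Idx n) ℝ) := by
  have key : ∀ (b : Fin n → ℝ) (x y : Idx n),
      (M * fromBlocks 0 (replicateCol Unit b) (σ • replicateRow Unit b) 0) x y =
      (fromBlocks 0 (replicateCol Unit b) (σ • replicateRow Unit b) 0 * M) x y :=
    fun b x y => congrFun (congrFun (hM b) x) y
  have ntr : Nontrivial (Fin n) := Fin.nontrivial_iff_two_le.mpr hn
  set d := M (Sum.inr ()) (Sum.inr ()) with hd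
  -- p = 0 : M (inl i) (inr ()) = 0
  have hp : ∀ i : Fin n, M (Sum.inl i) (Sum.inr ()) = 0 := by
    intro i
    obtain ⟨j, hj⟩ := exists_ne i
    have := key (Pi.single j 1) (Sum.inl i) (Sum.inl j)
    simp [Matrix.mul_apply, Fintype.sum_sum_type, Matrix.fromBlocks, Matrix.replicateCol,
      Matrix.replicateRow, Pi.single_apply, hj] at this
    rw [if_neg (Ne.symm hj)] at this
    exact (mul_eq_zero.mp this).resolve_right hσ
  -- q = 0 : M (inr ()) (inl j) = 0
  have hq : ∀ j : Fin n, M (Sum.inr ()) (Sum.inl j) = 0 := by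
    intro j
    have := key (Pi.single j 1) (Sum.inr ()) (Sum.inr ())
    simp [Matrix.mul_apply, Fintype.sum_sum_type, Matrix.fromBlocks, Matrix.replicateCol,
      Matrix.replicateRow, Pi.single_apply, hp j] at this
    exact this
  -- A = d I
  have hA : ∀ i j : Fin n, M (Sum.inl i) (Sum.inl j) = if i = j then d else 0 := by
    intro i j
    have := key (Pi.single j 1) (Sum.inl i) (Sum.inr ())
    simp [Matrix.mul_apply, Fintype.sum_sum_type, Matrix.fromBlocks, Matrix.replicateCol,
      Matrix.replicateRow, Pi.single_apply] at this
    exact this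
  refine ⟨d, ?_⟩
  ext x y
  rcases x with i | u <;> rcases y with j | v
  · simp [hA i j, Matrix.one_apply, Pi.single_apply]
  · simp [hp i]
  · simp [hq j]
  · cases u; cases v; simp [Matrix.one_apply, hd]
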